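/- Let A be a commutative noetherian local ring in which first syzygy modules (of finitely generated modules) are closed under extensions. If k^n (n ≥ 1) is a third syzygy of a finitely generated A-module, then k itself is a third syzygy of some finitely generated A-module. -/

import Mathlib

universe u

/-- `NthSyzygy A m N` : the module `N` is an `m`-th syzygy of a finitely generated
`A`-module, defined by iterating embeddings into finite free modules. -/
def NthSyzygy (A : Type u) [Ring A] : ℕ → ModuleCat.{u} A → Prop
  | 0, N => Module.Finite A N
  | m + 1, N => ∃ (r : ℕ) (M : ModuleCat.{u} A), NthSyzygy A m M ∧
      ∃ (f : N →ₗ[A] (Fin r → A)) (g : (Fin r → A) →ₗ[A] M),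
        Function.Injective f ∧ Function.Surjective g ∧ Function.Exact f g

open IsLocalRing Submodule LinearMap
set_option linter.unusedSectionVars false

section StmtTwelveHelpers

variable {A : Type u} [CommRing A] [IsLocalRing A]

lemma stmt12_smul_k (a : A) (y : ResidueField A) : a • y = residue A a * y := by
  obtain ⟨c, rfl⟩ := Ideal.Quotient.mk_surjective y
  rfl

noncomputable def stmt12kToA (u : A) (hum : ∀ b ∈ maximalIdeal A, b * u = 0) :
    ResidueField A →ₗ[A] A :=
  Submodule.liftQ (maximalIdeal A) (LinearMap.toSpanSingleton A A u)
    (fun b hb => by simpa [LinearMap.toSpanSingleton, smul_eq_mul] using hum b hb)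

lemma stmt12kToA_mk (u : A) (hum : ∀ b ∈ maximalIdeal A, b * u = 0) (a : A) :
    stmt12kToA u hum (residue A a) = a * u := by
  simp [stmt12kToA, residue, smul_eq_mul]; rfl

lemma stmt12kToA_injective (u : A) (hu : u ≠ 0) (hum : ∀ b ∈ maximalIdeal A, b * u = 0) :
    Function.Injective (stmt12kToA u hum) := by
  refine LinearMap.ker_eq_bot.mp (Submodule.ker_liftQ_eq_bot _ _ _ ?_)
  intro a ha
  simp only [LinearMap.mem_ker, LinearMap.toSpanSingleton_apply, smul_eq_mul] at ha
  by_contra hma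
  obtain ⟨c, hc⟩ := (IsLocalRing.notMem_maximalIdeal.mp hma).exists_left_inv
  exact hu (by calc u = c * a * u := by rw [hc, one_mul]
                  _ = 0 := by rw [mul_assoc, ha, mul_zero])

lemma stmt12_exists_embed (X : Type u) [AddCommGroup X] [Module A X]
    [Module.Finite A X]
    (u : A) (hu : u ≠ 0) (hum : ∀ b ∈ maximalIdeal A, b * u = 0)
    (hX : ∀ b ∈ maximalIdeal A, ∀ x : X, b • x = 0) :
    ∃ (N : ℕ) (ψ : X →ₗ[A] (Fin N → A)), Function.Injective ψ := by
  have htor : Module.IsTorsionBySet A X (maximalIdeal A) := fun x b => hX b.1 b.2 x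
  letI kMod : Module (ResidueField A) X := htor.module
  have hsmul : ∀ (a : A) (x : X), a • x = (residue A a) • x := fun a x =>
    (htor.mk_smul a x).symm
  have hfin : Module.Finite (ResidueField A) X := by
    obtain ⟨S, hS⟩ := (Module.Finite.fg_top : (⊤ : Submodule A X).FG)
    refine ⟨⟨S, eq_top_iff.mpr fun x _ => ?_⟩⟩
    have hx : x ∈ Submodule.span A (S : Set X) := hS ▸ Submodule.mem_top
    refine Submodule.span_induction (fun y hy => Submodule.subset_span hy)
      (Submodule.zero_mem _) (fun y z _ _ hy hz => Submodule.add_mem _ hy hz)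
      (fun a y _ hy => ?_) hx
    rw [hsmul a y]
    exact Submodule.smul_mem _ _ hy
  let b := Module.finBasis (ResidueField A) X
  refine ⟨Module.finrank (ResidueField A) X,
    { toFun := fun x i => stmt12kToA u hum (b.repr x i)
      map_add' := fun x y => by funext i; simp
      map_smul' := fun a x => by
        funext i
        simp only [RingHom.id_apply, Pi.smul_apply, smul_eq_mul]
        rw [hsmul a x, map_smul, Finsupp.smul_apply, smul_eq_mul, ← stmt12_smul_k,
          map_smul, smul_eq_mul] }, ?_⟩
  intro x y hxy
  apply b.repr.injective
  apply Finsupp.ext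
  intro i
  exact stmt12kToA_injective u hu hum (congrFun hxy i)

lemma stmt12_syz1_of_embed [IsNoetherianRing A] {X : Type u} [AddCommGroup X] [Module A X]
    {N : ℕ} (ψ : X →ₗ[A] (Fin N → A)) (hψ : Function.Injective ψ) :
    NthSyzygy A 1 (ModuleCat.of A X) := by
  refine ⟨N, ModuleCat.of A ((Fin N → A) ⧸ LinearMap.range ψ), ?_,
    ψ, (LinearMap.range ψ).mkQ, hψ, Submodule.mkQ_surjective _, ?_⟩
  · show Module.Finite A ((Fin N → A) ⧸ LinearMap.range ψ)
    infer_instance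
  · rw [LinearMap.exact_iff, Submodule.ker_mkQ]

lemma stmt12_exists_functional {X : Type u} [AddCommGroup X] [Module A X]
    (hX : ∀ b ∈ maximalIdeal A, ∀ x : X, b • x = 0) (x₀ : X) (hx₀ : x₀ ≠ 0) :
    ∃ lam : X → ResidueField A,
      (∀ (a : A) (x : X), lam (a • x) = residue A a * lam x) ∧
      (∀ x y, lam (x + y) = lam x + lam y) ∧ lam x₀ = 1 := by
  have htor : Module.IsTorsionBySet A X (maximalIdeal A) := fun x b => hX b.1 b.2 x
  letI kMod : Module (ResidueField A) X := htor.module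
  have hsmul : ∀ (a : A) (x : X), a • x = (residue A a) • x := fun a x =>
    (htor.mk_smul a x).symm
  obtain ⟨q, hq⟩ := Submodule.exists_isCompl (Submodule.span (ResidueField A) {x₀})
  let proj := Submodule.projectionOnto _ q hq
  let e := LinearEquiv.toSpanNonzeroSingleton (ResidueField A) X x₀ hx₀
  refine ⟨fun x => e.symm (proj x), fun a x => ?_, fun x y => by simp, ?_⟩
  · show e.symm (proj (a • x)) = residue A a * e.symm (proj x)
    rw [hsmul a x, map_smul, map_smul, smul_eq_mul]
  · show e.symm (proj x₀) = 1
    have h1 : proj x₀ = e 1 := by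
      rw [Submodule.projectionOnto_apply_left hq ⟨x₀, Submodule.mem_span_singleton_self x₀⟩]
      show _ = (⟨(1 : ResidueField A) • x₀, _⟩ : ↥(Submodule.span (ResidueField A) {x₀}))
      simp
    rw [h1, LinearEquiv.symm_apply_apply]

end StmtTwelveHelpers

set_option maxHeartbeats 2000000

/-- Let `A` be a commutative noetherian local ring in which first syzygy
modules of finitely generated modules are closed under extensions.  If `k^n` (`n ≥ 1`) is a
third syzygy of a finitely generated `A`-module, then `k` itself is a third syzygy. -/
theorem stmt12 {A : Type u} [CommRing A] [IsNoetherianRing A] [IsLocalRing A]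
    (hext : ∀ (N₁ L N₂ : ModuleCat.{u} A) (f : N₁ →ₗ[A] L) (g : L →ₗ[A] N₂),
      Function.Injective f → Function.Surjective g → Function.Exact f g →
      Module.Finite A L →
      NthSyzygy A 1 N₁ → NthSyzygy A 1 N₂ → NthSyzygy A 1 L)
    (n : ℕ) (hn : 1 ≤ n)
    (h : NthSyzygy A 3 (ModuleCat.of A (Fin n → IsLocalRing.ResidueField A))) :
    NthSyzygy A 3 (ModuleCat.of A (IsLocalRing.ResidueField A)) := by
  classical
  obtain ⟨r, M, hM2, f, g, hfinj, hgsurj, hfg⟩ := h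
  obtain ⟨r₂, M₁, hM1, f₂, g₂, hf₂inj, hg₂surj, hfg₂⟩ := hM2
  have hkerg : LinearMap.ker g = LinearMap.range f := LinearMap.exact_iff.mp hfg
  have hmV : ∀ y ∈ LinearMap.range f, ∀ b ∈ maximalIdeal A, b • y = 0 := by
    rintro y ⟨z, rfl⟩ b hb
    rw [← map_smul]
    have hz0 : b • z = 0 := by
      funext j
      show b • z j = 0
      rw [stmt12_smul_k, show residue A b = 0 from Ideal.Quotient.eq_zero_iff_mem.mpr hb, zero_mul]
    rw [hz0, map_zero]
  -- the nonzero socle vector v = f z, u = v i₀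
  set z : Fin n → ResidueField A := Pi.single ⟨0, hn⟩ 1 with hzdef
  have hz : z ≠ 0 := by
    intro h0
    have h1 := congrFun h0 ⟨0, hn⟩
    rw [hzdef, Pi.single_eq_same] at h1
    exact one_ne_zero h1
  set v : Fin r → A := f z with hvdef
  have hvV : v ∈ LinearMap.range f := ⟨z, rfl⟩
  have hv : v ≠ 0 := fun h0 => hz (by
    apply hfinj
    rw [← hvdef, h0, map_zero])
  obtain ⟨i₀, hvi₀⟩ : ∃ i, v i ≠ 0 := by
    by_contra hno
    push_neg at hno
    exact hv (funext hno)
  set u : A := v i₀ with hudef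
  have hmv : ∀ b ∈ maximalIdeal A, b • v = 0 := fun b hb => hmV v hvV b hb
  have hum : ∀ b ∈ maximalIdeal A, b * u = 0 := fun b hb => by
    have h1 := congrFun (hmv b hb) i₀
    simpa using h1
  -- Step A : C = A^r / <v> is a first syzygy, via hext
  have hspan_le : Submodule.span A {v} ≤ LinearMap.ker g := by
    rw [Submodule.span_le, hkerg]
    rintro _ rfl
    exact hvV
  set C := (Fin r → A) ⧸ Submodule.span A {v} with hCdef
  set g' : C →ₗ[A] M := Submodule.liftQ _ g hspan_le with hg'def
  set S := (LinearMap.range f).map (Submodule.span A {v}).mkQ with hSdef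
  have hCfin : Module.Finite A C := Module.Finite.quotient A _
  have hCnoeth : IsNoetherian A C := inferInstance
  have hSfin : Module.Finite A ↥S := by
    rw [Module.Finite.iff_fg]
    exact IsNoetherian.noetherian S
  have hSkill : ∀ b ∈ maximalIdeal A, ∀ x : ↥S, b • x = 0 := by
    rintro b hb ⟨x, hx⟩
    obtain ⟨y, hy, rfl⟩ := hx
    apply Subtype.ext
    show b • (Submodule.span A {v}).mkQ y = 0
    rw [← map_smul, hmV y hy b hb, map_zero]
  obtain ⟨Ns, ψS, hψS⟩ := stmt12_exists_embed ↥S u hvi₀ hum hSkill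
  have hS1 : NthSyzygy A 1 (ModuleCat.of A ↥S) := stmt12_syz1_of_embed ψS hψS
  have hM1fin : Module.Finite A ↥M₁ := by
    obtain ⟨r₁, M₀, _, f₁, g₁, hf₁, _, _⟩ := hM1
    exact Module.Finite.of_injective f₁ hf₁
  have hMsyz1 : NthSyzygy A 1 M := ⟨r₂, M₁, hM1fin, f₂, g₂, hf₂inj, hg₂surj, hfg₂⟩
  have hC1 : NthSyzygy A 1 (ModuleCat.of A C) := by
    refine hext (ModuleCat.of A ↥S) (ModuleCat.of A C) M S.subtype g' ?_ ?_ ?_ hCfin hS1 hMsyz1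
    · exact Subtype.val_injective
    · have h1 : LinearMap.range g' = ⊤ := by
        rw [hg'def, Submodule.range_liftQ, LinearMap.range_eq_top.mpr hgsurj]
      exact LinearMap.range_eq_top.mp h1
    · rw [LinearMap.exact_iff, hg'def, Submodule.ker_liftQ, hkerg, Submodule.range_subtype, hSdef]
  obtain ⟨s₁, M', _, φ₀, gφ, hφ₀inj, _, _⟩ := hC1
  set φ : (Fin r → A) →ₗ[A] (Fin s₁ → A) := φ₀.comp (Submodule.span A {v}).mkQ with hφdef
  have hkerφ : ∀ y, φ y = 0 ↔ y ∈ Submodule.span A {v} := by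
    intro y
    rw [hφdef]
    constructor
    · intro h0
      have h1 : (Submodule.span A {v}).mkQ y = 0 := hφ₀inj (by rw [map_zero]; exact h0)
      rwa [← Submodule.Quotient.mk_eq_zero, ← Submodule.mkQ_apply]
    · intro hy
      show φ₀ ((Submodule.span A {v}).mkQ y) = 0
      rw [Submodule.mkQ_apply, Submodule.Quotient.mk_eq_zero _ |>.mpr hy, map_zero]
  -- Step B : the socle W is generated by u
  set W : Submodule A A := Submodule.torsionBySet A A ↑(maximalIdeal A) with hWdef
  have hmemW : ∀ a : A, a ∈ W ↔ ∀ b ∈ maximalIdeal A, b * a = 0 := by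
    intro a
    rw [hWdef, Submodule.mem_torsionBySet_iff]
    constructor
    · intro h1 b hb
      have h2 := h1 ⟨b, hb⟩
      simpa using h2
    · intro h1 b
      have h2 := h1 b.1 b.2
      simpa using h2
  have huW : u ∈ W := (hmemW u).mpr hum
  have hvjW : ∀ j, v j ∈ W := fun j => (hmemW _).mpr (fun b hb => by
    have h2 := congrFun (hmv b hb) j
    simpa using h2)
  have hWkill : ∀ b ∈ maximalIdeal A, ∀ x : ↥W, b • x = 0 := by
    rintro b hb ⟨x, hx⟩
    apply Subtype.ext
    show b • x = 0
    rw [smul_eq_mul]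
    exact (hmemW x).mp hx b hb
  obtain ⟨lam, hlam_smul, hlam_add, hlam_u⟩ :=
    stmt12_exists_functional hWkill (⟨u, huW⟩ : ↥W)
      (fun h0 => hvi₀ (congrArg Subtype.val h0))
  set Lam : ↥W →+ ResidueField A := AddMonoidHom.mk' lam hlam_add with hLamdef
  have hWcyc : ∀ w ∈ W, ∃ c : A, w = c * u := by
    intro w hw
    have hwm : ∀ b ∈ maximalIdeal A, b * w = 0 := (hmemW w).mp hw
    set κ := stmt12kToA w hwm with hκdef
    set y : Fin r → A := fun j => κ (lam ⟨v j, hvjW j⟩) with hydef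
    have hφy : φ y = 0 := by
      funext l
      set B : Fin r → A := fun j => φ (fun j' => if j = j' then 1 else 0) l with hBdef
      have hy_l : φ y l = ∑ j, y j * B j := by
        rw [LinearMap.pi_apply_eq_sum_univ φ y]
        rw [Finset.sum_apply]
        exact Finset.sum_congr rfl (fun j _ => by rw [Pi.smul_apply, smul_eq_mul, hBdef])
      have hφv : φ v = 0 := (hkerφ v).mpr (Submodule.mem_span_singleton_self v)
      have hv_l : (0 : A) = ∑ j, B j * v j := by
        calc (0 : A) = φ v l := by rw [hφv]; rfl
          _ = ∑ j, v j * B j := by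
            rw [LinearMap.pi_apply_eq_sum_univ φ v, Finset.sum_apply]
            exact Finset.sum_congr rfl (fun j _ => by rw [Pi.smul_apply, smul_eq_mul, hBdef])
          _ = ∑ j, B j * v j := Finset.sum_congr rfl (fun j _ => mul_comm _ _)
      have key : (∑ j, B j • (⟨v j, hvjW j⟩ : ↥W)) = 0 := by
        apply Subtype.ext
        rw [AddSubmonoidClass.coe_finset_sum]
        show (∑ j, ((B j • (⟨v j, hvjW j⟩ : ↥W)) : A)) = (0 : A)
        calc (∑ j, ((B j • (⟨v j, hvjW j⟩ : ↥W)) : A)) = ∑ j, B j * v j :=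
          Finset.sum_congr rfl (fun j _ => by rw [smul_eq_mul])
          _ = 0 := hv_l.symm
      show φ y l = (0 : Fin s₁ → A) l
      rw [hy_l]
      calc (∑ j, y j * B j) = ∑ j, κ (lam ((B j) • (⟨v j, hvjW j⟩ : ↥W))) := by
            refine Finset.sum_congr rfl (fun j _ => ?_)
            rw [hydef]
            show κ (lam ⟨v j, hvjW j⟩) * B j = _
            rw [mul_comm, hlam_smul, ← stmt12_smul_k, map_smul, smul_eq_mul]
        _ = κ (Lam (∑ j, B j • (⟨v j, hvjW j⟩ : ↥W))) := by
            rw [map_sum Lam, map_sum κ]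
            rfl
        _ = 0 := by rw [key, map_zero, map_zero]
    obtain ⟨c, hc⟩ := Submodule.mem_span_singleton.mp ((hkerφ y).mp hφy)
    refine ⟨c, ?_⟩
    have h1 : c * u = y i₀ := by
      have h2 := congrFun hc i₀
      rwa [Pi.smul_apply, smul_eq_mul, ← hudef] at h2
    have h2 : y i₀ = w := by
      rw [hydef]
      show κ (lam ⟨v i₀, hvjW i₀⟩) = w
      have h3 : lam ⟨v i₀, hvjW i₀⟩ = 1 := hlam_u
      rw [h3, show (1 : IsLocalRing.ResidueField A) = residue A 1 from rfl, stmt12kToA_mk,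
        one_mul]
    rw [← h2, ← h1]
  -- Step C : the vector x with u • x = v and x i₀ = 1
  have hxex : ∀ j, ∃ c, v j = c * u := fun j => hWcyc (v j) (hvjW j)
  set x : Fin r → A := fun j => if j = i₀ then 1 else (hxex j).choose with hxdef
  have hxi₀ : x i₀ = 1 := by rw [hxdef]; simp
  have hux : ∀ j, u * x j = v j := by
    intro j
    rw [hxdef]
    by_cases hj : j = i₀
    · subst hj
      simp [hudef]
    · simp only [hj, if_false]
      rw [mul_comm]
      exact ((hxex j).choose_spec).symm
  -- Step D : the maps d, etil, f₃
  set d : (Fin r → A) →ₗ[A] (Fin r₂ → A) := f₂ ∘ₗ g with hddef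
  have hkerd : LinearMap.ker d = LinearMap.ker g := by
    rw [hddef, LinearMap.ker_comp, LinearMap.ker_eq_bot.mpr hf₂inj, Submodule.comap_bot]
  have hrange_d : LinearMap.range d = LinearMap.range f₂ := by
    rw [hddef, LinearMap.range_comp, LinearMap.range_eq_top.mpr hgsurj, Submodule.map_top]
  set dx : Fin r₂ → A := d x with hdxdef
  have hkermem : ∀ a : A, a • x ∈ LinearMap.range f ↔ ∃ c : A, a = c * u := by
    intro a
    constructor
    · intro ha
      have haW : a ∈ W := (hmemW a).mpr (fun b hb => by
        have h1 := congrFun (hmV _ ha b hb) i₀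
        rw [Pi.smul_apply, Pi.smul_apply, smul_eq_mul, smul_eq_mul, hxi₀, mul_one] at h1
        exact h1)
      exact hWcyc a haW
    · rintro ⟨c, rfl⟩
      have h1 : (c * u) • x = c • v := by
        funext j
        rw [Pi.smul_apply, Pi.smul_apply, smul_eq_mul, smul_eq_mul, mul_assoc, hux j]
      rw [h1]
      exact Submodule.smul_mem _ c hvV
  set κu := stmt12kToA u hum with hκudef
  set f₃ : IsLocalRing.ResidueField A →ₗ[A] (Fin 1 → A) := LinearMap.pi (fun _ => κu)
    with hf₃def
  have hf₃inj : Function.Injective f₃ := by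
    intro c c' hcc
    exact stmt12kToA_injective u hvi₀ hum (congrFun hcc 0)
  set etil : (Fin 1 → A) →ₗ[A] (Fin r₂ → A) :=
    LinearMap.smulRight (LinearMap.proj 0) dx with hetildef
  have hetil_apply : ∀ yy : Fin 1 → A, etil yy = yy 0 • dx := fun yy => rfl
  have hrange_f₃ : ∀ yy : Fin 1 → A, (∃ cbar, f₃ cbar = yy) ↔ ∃ c : A, yy 0 = c * u := by
    intro yy
    constructor
    · rintro ⟨cbar, rfl⟩
      obtain ⟨c, rfl⟩ := Ideal.Quotient.mk_surjective cbar
      refine ⟨c, ?_⟩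
      show κu (residue A c) = c * u
      exact stmt12kToA_mk u hum c
    · rintro ⟨c, hc⟩
      refine ⟨residue A c, ?_⟩
      funext l
      have hl : l = 0 := Subsingleton.elim l 0
      subst hl
      show κu (residue A c) = yy 0
      rw [stmt12kToA_mk, ← hc]
  have hker_etil : ∀ yy : Fin 1 → A, etil yy = 0 ↔ ∃ c : A, yy 0 = c * u := by
    intro yy
    rw [hetil_apply]
    constructor
    · intro h0
      have h1 : d (yy 0 • x) = 0 := by rw [map_smul, ← hdxdef, h0]
      have h2 : yy 0 • x ∈ LinearMap.range f := by
        rw [← hkerg, ← hkerd]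
        exact h1
      exact (hkermem (yy 0)).mp h2
    · rintro ⟨c, hc⟩
      have h2 : yy 0 • x ∈ LinearMap.ker d := by
        rw [hkerd, hkerg]
        exact (hkermem (yy 0)).mpr ⟨c, hc⟩
      have h3 : d (yy 0 • x) = 0 := h2
      rwa [map_smul, ← hdxdef] at h3
  -- final assembly
  refine ⟨1, ModuleCat.of A ((Fin 1 → A) ⧸ LinearMap.range f₃), ?_, f₃,
    (LinearMap.range f₃).mkQ, hf₃inj, Submodule.mkQ_surjective _, ?_⟩
  swap
  · rw [LinearMap.exact_iff, Submodule.ker_mkQ]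
  have hle : LinearMap.range f₃ ≤ LinearMap.ker etil := by
    rintro _ ⟨cbar, rfl⟩
    show etil (f₃ cbar) = 0
    rw [hker_etil (f₃ cbar)]
    exact (hrange_f₃ (f₃ cbar)).mp ⟨cbar, rfl⟩
  set f₄ : ((Fin 1 → A) ⧸ LinearMap.range f₃) →ₗ[A] (Fin r₂ → A) :=
    Submodule.liftQ _ etil hle with hf₄def
  have hf₄inj : Function.Injective f₄ := by
    rw [← LinearMap.ker_eq_bot, hf₄def]
    rw [Submodule.ker_liftQ_eq_bot]
    intro yy hy
    obtain ⟨c, hc⟩ := (hker_etil yy).mp hy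
    obtain ⟨cbar, hcb⟩ := (hrange_f₃ yy).mpr ⟨c, hc⟩
    exact ⟨cbar, hcb⟩
  set Z := (Fin r₂ → A) ⧸ LinearMap.range etil with hZdef
  have hZ1 : NthSyzygy A 1 (ModuleCat.of A Z) := by
    have hrange_etil_le : LinearMap.range etil ≤ LinearMap.ker g₂ := by
      rintro _ ⟨yy, rfl⟩
      have h1 : etil yy ∈ LinearMap.range d :=
        ⟨yy 0 • x, by rw [map_smul, ← hdxdef, hetil_apply]⟩
      rw [LinearMap.mem_ker, ← LinearMap.mem_ker, LinearMap.exact_iff.mp hfg₂, ← hrange_d]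
      exact h1
    set gz := Submodule.liftQ (LinearMap.range etil) g₂ hrange_etil_le with hgzdef
    set S₂ := (LinearMap.range d).map (LinearMap.range etil).mkQ with hS₂def
    have hgzsurj : Function.Surjective gz := by
      have h1 : LinearMap.range gz = ⊤ := by
        rw [hgzdef, Submodule.range_liftQ, LinearMap.range_eq_top.mpr hg₂surj]
      exact LinearMap.range_eq_top.mp h1
    have hexZ : Function.Exact S₂.subtype gz := by
      rw [LinearMap.exact_iff, hgzdef, Submodule.ker_liftQ, LinearMap.exact_iff.mp hfg₂,
        ← hrange_d, Submodule.range_subtype, hS₂def]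
    -- the map θ : A^r → S₂ with kernel J
    have hmemS₂ : ∀ yr : Fin r → A, (LinearMap.range etil).mkQ (d yr) ∈ S₂ := fun yr =>
      Submodule.mem_map_of_mem ⟨yr, rfl⟩
    set θ : (Fin r → A) →ₗ[A] ↥S₂ :=
      LinearMap.codRestrict S₂ ((LinearMap.range etil).mkQ ∘ₗ d) hmemS₂ with hθdef
    have hθapp : ∀ yr, (θ yr : (Fin r₂ → A) ⧸ LinearMap.range etil)
        = (LinearMap.range etil).mkQ (d yr) := fun yr => rfl
    have hθsurj : Function.Surjective θ := by
      rintro ⟨zz, hz⟩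
      obtain ⟨w2, ⟨yr, rfl⟩, rfl⟩ := hz
      exact ⟨yr, rfl⟩
    set J := Submodule.span A {x} ⊔ LinearMap.range f with hJdef
    have hkerθ : LinearMap.ker θ = J := by
      ext yr
      rw [LinearMap.mem_ker]
      constructor
      · intro h0
        have h2 : (LinearMap.range etil).mkQ (d yr) = 0 := by
          rw [← hθapp yr, h0]
          rfl
        rw [Submodule.mkQ_apply, Submodule.Quotient.mk_eq_zero] at h2
        obtain ⟨yy, hyy⟩ := h2
        have h3 : yr - yy 0 • x ∈ LinearMap.ker d := by
          rw [LinearMap.mem_ker, map_sub, map_smul, ← hdxdef, ← hetil_apply, hyy, sub_self]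
        have h4 : yr = yy 0 • x + (yr - yy 0 • x) := by abel
        rw [hJdef, h4]
        refine Submodule.add_mem _ (Submodule.mem_sup_left
          (Submodule.smul_mem _ _ (Submodule.mem_span_singleton_self x)))
          (Submodule.mem_sup_right ?_)
        rw [hkerd, hkerg] at h3
        exact h3
      · intro hy
        apply Subtype.ext
        rw [hθapp yr]
        show (LinearMap.range etil).mkQ (d yr) = 0
        rw [Submodule.mkQ_apply, Submodule.Quotient.mk_eq_zero]
        obtain ⟨y1, hy1, y2, hy2, rfl⟩ := Submodule.mem_sup.mp hy
        rw [map_add]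
        apply Submodule.add_mem
        · obtain ⟨c, rfl⟩ := Submodule.mem_span_singleton.mp hy1
          exact ⟨fun _ => c, by rw [hetil_apply, map_smul, hdxdef]⟩
        · have h5 : d y2 = 0 := by
            rw [← LinearMap.mem_ker, hkerd, hkerg]
            exact hy2
          rw [h5]
          exact Submodule.zero_mem _
    -- the socle submodule of A^r
    set Soc : Submodule A (Fin r → A) := Submodule.torsionBySet A _ ↑(maximalIdeal A)
      with hSocdef
    have hmemSoc : ∀ yr : Fin r → A, yr ∈ Soc ↔ ∀ b ∈ maximalIdeal A, b • yr = 0 := by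
      intro yr
      rw [hSocdef, Submodule.mem_torsionBySet_iff]
      constructor
      · intro h1 b hb
        have h2 := h1 ⟨b, hb⟩
        simpa using h2
      · intro h1 b
        have h2 := h1 b.1 b.2
        simpa using h2
    set Big := Soc ⊔ Submodule.span A {x} with hBigdef
    have hJle : J ≤ Big := by
      rw [hJdef, hBigdef]
      refine sup_le ?_ ?_
      · exact le_sup_right
      · refine le_trans ?_ (le_sup_left)
        intro yr hyr
        exact (hmemSoc yr).mpr (fun b hb => hmV yr hyr b hb)
    set Y := (Fin r → A) ⧸ J with hYdef
    have hJle' : J ≤ LinearMap.ker Big.mkQ := by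
      rw [Submodule.ker_mkQ]
      exact hJle
    set gy : Y →ₗ[A] ((Fin r → A) ⧸ Big) := Submodule.liftQ _ Big.mkQ hJle' with hgydef
    have hgysurj : Function.Surjective gy := by
      have h1 : LinearMap.range gy = ⊤ := by
        rw [hgydef, Submodule.range_liftQ, Submodule.range_mkQ]
      exact LinearMap.range_eq_top.mp h1
    set S₃ := Soc.map J.mkQ with hS₃def
    have hxJ : x ∈ J := by
      rw [hJdef]
      exact Submodule.mem_sup_left (Submodule.mem_span_singleton_self x)
    have hkergy : LinearMap.ker gy = S₃ := by
      rw [hgydef, Submodule.ker_liftQ, Submodule.ker_mkQ, hBigdef, Submodule.map_sup,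
        Submodule.map_span, Set.image_singleton, Submodule.mkQ_apply,
        (Submodule.Quotient.mk_eq_zero J).mpr hxJ, Submodule.span_zero_singleton, sup_bot_eq,
        hS₃def]
    have hexY : Function.Exact S₃.subtype gy := by
      rw [LinearMap.exact_iff, hkergy, Submodule.range_subtype]
    -- S₃ is a first syzygy
    have hS₃fin : Module.Finite A ↥S₃ := by
      rw [Module.Finite.iff_fg]
      exact IsNoetherian.noetherian S₃
    have hS₃kill : ∀ b ∈ maximalIdeal A, ∀ xx : ↥S₃, b • xx = 0 := by
      rintro b hb ⟨xx, hxx⟩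
      obtain ⟨yr, hyr, rfl⟩ := hxx
      apply Subtype.ext
      show b • J.mkQ yr = 0
      rw [← map_smul, (hmemSoc yr).mp hyr b hb, map_zero]
    obtain ⟨Ns₃, ψS₃, hψS₃⟩ := stmt12_exists_embed ↥S₃ u hvi₀ hum hS₃kill
    have hS₃1 : NthSyzygy A 1 (ModuleCat.of A ↥S₃) := stmt12_syz1_of_embed ψS₃ hψS₃
    -- P = A^r / Big is a first syzygy, via the explicit map Ψ₀
    set pr : (Fin r → A) →ₗ[A] (Fin r → A) :=
      LinearMap.id - LinearMap.smulRight (LinearMap.proj i₀) x with hprdef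
    have hpr_apply : ∀ yr, pr yr = yr - yr i₀ • x := fun yr => rfl
    have hprx : pr x = 0 := by rw [hpr_apply, hxi₀, one_smul, sub_self]
    obtain ⟨gn, agen, hagen⟩ := Submodule.fg_iff_exists_fin_generating_family.mp
      (IsNoetherian.noetherian (maximalIdeal A))
    set Ψ₀ : (Fin r → A) →ₗ[A] (Fin gn → (Fin r → A)) :=
      LinearMap.pi (fun i => agen i • pr) with hΨ₀def
    have hΨ₀_apply : ∀ yr i, Ψ₀ yr i = agen i • pr yr := fun yr i => rfl
    have hkerΨ₀ : ∀ yr, Ψ₀ yr = 0 ↔ yr ∈ Big := by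
      intro yr
      constructor
      · intro h0
        have h1 : ∀ b ∈ maximalIdeal A, b • pr yr = 0 := by
          intro b hb
          rw [← hagen] at hb
          refine Submodule.span_induction ?_ ?_ ?_ ?_ hb
          · rintro b1 ⟨i, rfl⟩
            have h2 := congrFun h0 i
            rw [hΨ₀_apply] at h2
            exact h2
          · rw [zero_smul]
          · intro b1 b2 _ _ e1 e2
            rw [add_smul, e1, e2, add_zero]
          · intro a b1 _ e1
            rw [smul_eq_mul, mul_smul, e1, smul_zero]
        have h2 : pr yr ∈ Soc := (hmemSoc _).mpr h1
        have h3 : yr = pr yr + yr i₀ • x := by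
          rw [hpr_apply]
          abel
        rw [hBigdef, h3]
        exact Submodule.add_mem _ (Submodule.mem_sup_left h2)
          (Submodule.mem_sup_right (Submodule.smul_mem _ _
            (Submodule.mem_span_singleton_self x)))
      · intro hyr
        obtain ⟨s1, hs1, s2, hs2, rfl⟩ := Submodule.mem_sup.mp hyr
        funext i
        rw [hΨ₀_apply, map_add]
        obtain ⟨c, rfl⟩ := Submodule.mem_span_singleton.mp hs2
        rw [map_smul, hprx, smul_zero, add_zero, hpr_apply, smul_sub]
        have e1 : agen i • s1 = 0 :=
          (hmemSoc s1).mp hs1 (agen i) (hagen ▸ Submodule.subset_span ⟨i, rfl⟩)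
        have e2 : agen i • (s1 i₀ • x) = 0 := by
          rw [smul_smul]
          have e3 : agen i * s1 i₀ = 0 := by
            have e4 := congrFun e1 i₀
            simpa using e4
          rw [e3, zero_smul]
        rw [e1, e2, sub_zero]
        rfl
    set EE : (Fin gn → Fin r → A) ≃ₗ[A] (Fin (gn * r) → A) :=
      (LinearEquiv.curry A A (Fin gn) (Fin r)).symm.trans
        (LinearEquiv.funCongrLeft A A finProdFinEquiv).symm with hEEdef
    have hBigker : Big ≤ LinearMap.ker (EE.toLinearMap ∘ₗ Ψ₀) := by
      intro yr hyr
      rw [LinearMap.mem_ker, LinearMap.comp_apply, (hkerΨ₀ yr).mpr hyr, map_zero]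
    set ΨP : ((Fin r → A) ⧸ Big) →ₗ[A] (Fin (gn * r) → A) :=
      Submodule.liftQ _ (EE.toLinearMap ∘ₗ Ψ₀) hBigker with hΨPdef
    have hΨPinj : Function.Injective ΨP := by
      rw [← LinearMap.ker_eq_bot, hΨPdef, Submodule.ker_liftQ_eq_bot]
      intro yr hyr
      rw [LinearMap.mem_ker, LinearMap.comp_apply] at hyr
      have h1 : Ψ₀ yr = 0 := by
        apply EE.injective
        rw [map_zero]
        exact hyr
      exact (hkerΨ₀ yr).mp h1
    have hP1 : NthSyzygy A 1 (ModuleCat.of A ((Fin r → A) ⧸ Big)) :=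
      stmt12_syz1_of_embed ΨP hΨPinj
    -- hext for Y
    have hYfin : Module.Finite A Y := Module.Finite.quotient A _
    have hY1 : NthSyzygy A 1 (ModuleCat.of A Y) :=
      hext (ModuleCat.of A ↥S₃) (ModuleCat.of A Y) (ModuleCat.of A ((Fin r → A) ⧸ Big))
        S₃.subtype gy Subtype.val_injective hgysurj hexY hYfin hS₃1 hP1
    obtain ⟨sY, MY, _, φY, gY, hφYinj, _, _⟩ := hY1
    -- transfer the embedding from Y to S₂
    set isoY : Y ≃ₗ[A] ↥S₂ :=
      (Submodule.quotEquivOfEq J (LinearMap.ker θ) hkerθ.symm).trans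
        (θ.quotKerEquivOfSurjective hθsurj) with hisoYdef
    set ψS₂ : ↥S₂ →ₗ[A] (Fin sY → A) := φY ∘ₗ (isoY.symm : ↥S₂ →ₗ[A] Y) with hψS₂def
    have hψS₂inj : Function.Injective ψS₂ := by
      intro a b hab
      exact isoY.symm.injective (hφYinj hab)
    have hS₂1 : NthSyzygy A 1 (ModuleCat.of A ↥S₂) := stmt12_syz1_of_embed ψS₂ hψS₂inj
    refine hext (ModuleCat.of A ↥S₂) (ModuleCat.of A Z) M₁ S₂.subtype gz
      Subtype.val_injective hgzsurj hexZ ?_ hS₂1 hM1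
    show Module.Finite A Z
    infer_instance
  refine ⟨r₂, ModuleCat.of A Z, hZ1, f₄, (LinearMap.range etil).mkQ, hf₄inj,
    Submodule.mkQ_surjective _, ?_⟩
  rw [LinearMap.exact_iff, Submodule.ker_mkQ, hf₄def, Submodule.range_liftQ]
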